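/- Let 𝒢 be a K_{s,t}^{(r)}-free r-uniform balanced r-partite hypergraph on rn vertices, and suppose every (r−1)-set lies in at most Δ edges. Then for every s-set S of vertices, the codegree cd_𝒢(S) = |CN_𝒢(S)| is at most rt·Δ·n^{r−3}. -/

import Mathlib

open Finset
open scoped Classical

noncomputable section

variable {V : Type}

/-- Number of edges of the hypergraph `G` containing the vertex set `A`. -/
def degSet (G : Finset (Finset V)) (A : Finset V) : ℕ :=
  (G.filter fun e => A ⊆ e).card

/-- The neighborhood of an `(r-1)`-tuple `T`: vertices completing `T` to an edge. -/
def linkN [Fintype V] (G : Finset (Finset V)) (T : Finset V) : Finset V :=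
  Finset.univ.filter fun v => v ∉ T ∧ insert v T ∈ G

/-- Common link `CN_G(S)`: the `(r-1)`-sets forming an edge with every vertex of `S`. -/
def CN (r : ℕ) [Fintype V] (G : Finset (Finset V)) (S : Finset V) : Finset (Finset V) :=
  Finset.univ.filter fun T : Finset V =>
    T.card = r - 1 ∧ ∀ v ∈ S, v ∉ T ∧ insert v T ∈ G

/-- `cd_G(S|u)`: number of members of `CN_G(S)` containing `u`. -/
def cdOn (r : ℕ) [Fintype V] (G : Finset (Finset V)) (S : Finset V) (u : V) : ℕ :=
  ((CN r G S).filter fun T => u ∈ T).card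

/-- `C` is a vertex cover of the set family `E`. -/
def IsVertexCover (C : Finset V) (E : Finset (Finset V)) : Prop :=
  ∀ T ∈ E, ∃ v ∈ C, v ∈ T

/-- `G` contains no copy of `K_{s,t}^{(r)}`. -/
def KstFree (r s t : ℕ) (G : Finset (Finset V)) : Prop :=
  ¬ ∃ (X : Fin t → Finset V) (Y : Finset V),
      (∀ i, (X i).card = r - 1) ∧ Y.card = s ∧
      (∀ i j, i ≠ j → Disjoint (X i) (X j)) ∧
      (∀ i, Disjoint (X i) Y) ∧
      ∀ i, ∀ y ∈ Y, insert y (X i) ∈ G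

/-- `G` is a balanced `r`-partite `r`-uniform hypergraph with parts `parts` of size `n`. -/
def IsPartite (r n : ℕ) (parts : Fin r → Finset V) (G : Finset (Finset V)) : Prop :=
  (∀ i j, i ≠ j → Disjoint (parts i) (parts j)) ∧
  (∀ v : V, ∃ i, v ∈ parts i) ∧
  (∀ i, (parts i).card = n) ∧
  ∀ e ∈ G, ∀ i, (e ∩ parts i).card = 1

/-- `(ε, α)`-regularity in the sense of the paper. -/
def RegularHG (r s n : ℕ) (parts : Fin r → Finset V) (G : Finset (Finset V)) (ε α : ℝ) : Prop :=
  (n : ℝ) ^ ((r : ℝ) - 1 / ((s : ℝ) - 1) - ε) ≤ (G.card : ℝ) ∧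
  ∀ i : Fin r, ∃ Δ : ℝ,
    (n : ℝ) ^ (1 - 1 / ((s : ℝ) - 1) - ε) ≤ Δ ∧
    Δ ≤ (n : ℝ) ^ (1 - 1 / ((s : ℝ) - 1) + ε) ∧
    ∀ T : Finset V, T.card = r - 1 → Disjoint T (parts i) → 1 ≤ degSet G T →
      Δ / α ≤ (degSet G T : ℝ) ∧ (degSet G T : ℝ) ≤ Δ

/-- The pair `(T; v)` is `δ`-dense on `u` in `G`. -/
def DenseOn (r s n : ℕ) [Fintype V] (G : Finset (Finset V)) (T : Finset V) (v u : V)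
    (δ : ℝ) : Prop :=
  (degSet G T : ℝ) ^ (s - 1) / (r : ℝ) ≤
    ((((linkN G T).powersetCard s).filter fun S =>
      v ∈ S ∧ (n : ℝ) ^ ((r : ℝ) - 2 - 1 / ((s : ℝ) - 1) - δ) ≤ (cdOn r G S u : ℝ)).card : ℝ)

/-- The relation `V_i →_δ^{H,G} V_j`. -/
def Arrow (r s n : ℕ) [Fintype V] (parts : Fin r → Finset V) (H G : Finset (Finset V))
    (i j : Fin r) (δ : ℝ) : Prop :=
  ∀ T : Finset V, T.card = r - 1 → Disjoint T (parts j) → 1 ≤ degSet H T →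
    ∀ v ∈ linkN H T, ∀ u ∈ T ∩ parts i, DenseOn r s n G T v u δ

lemma exists_cover_aux {V : Type} (m : ℕ) :
    ∀ (t : ℕ) (F : Finset (Finset V)),
    (¬ ∃ X : Fin t → Finset V, (∀ i, X i ∈ F) ∧ ∀ i j, i ≠ j → Disjoint (X i) (X j)) →
    (∀ T ∈ F, T.card ≤ m) →
    ∃ C : Finset V, IsVertexCover C F ∧ C.card ≤ t * m := by
  intro t
  induction t with
  | zero =>
    intro F h _
    exact absurd ⟨fun i => i.elim0, fun i => i.elim0, fun i => i.elim0⟩ h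
  | succ t ih =>
    intro F h hcard
    rcases F.eq_empty_or_nonempty with rfl | ⟨T0, hT0⟩
    · exact ⟨∅, fun T hT => absurd hT (by simp), by simp⟩
    · set F' := F.filter (fun T => Disjoint T T0) with hF'
      have h' : ¬ ∃ X : Fin t → Finset V,
          (∀ i, X i ∈ F') ∧ ∀ i j, i ≠ j → Disjoint (X i) (X j) := by
        rintro ⟨X, hXmem, hXdisj⟩
        apply h
        refine ⟨Fin.cons T0 X, ?_, ?_⟩
        · intro i
          induction i using Fin.cases with
          | zero => simpa using hT0
          | succ j =>
            simpa using (Finset.mem_filter.mp (hXmem j)).1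
        · intro i j hij
          induction i using Fin.cases with
          | zero =>
            induction j using Fin.cases with
            | zero => exact absurd rfl hij
            | succ j =>
              simp only [Fin.cons_zero, Fin.cons_succ]
              exact ((Finset.mem_filter.mp (hXmem j)).2).symm
          | succ i =>
            induction j using Fin.cases with
            | zero =>
              simp only [Fin.cons_zero, Fin.cons_succ]
              exact (Finset.mem_filter.mp (hXmem i)).2
            | succ j =>
              simp only [Fin.cons_succ]
              exact hXdisj i j (fun e => hij (by rw [e]))
      obtain ⟨C', hC', hC'card⟩ := ih F' h' (fun T hT => hcard T (Finset.mem_filter.mp hT).1)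
      refine ⟨C' ∪ T0, ?_, ?_⟩
      · intro T hT
        by_cases hd : Disjoint T T0
        · obtain ⟨x, hx, hx2⟩ := hC' T (Finset.mem_filter.mpr ⟨hT, hd⟩)
          exact ⟨x, Finset.mem_union_left _ hx, hx2⟩
        · obtain ⟨x, hx1, hx2⟩ := Finset.not_disjoint_iff.mp hd
          exact ⟨x, Finset.mem_union_right _ hx2, hx1⟩
      · calc (C' ∪ T0).card ≤ C'.card + T0.card := Finset.card_union_le _ _
          _ ≤ t * m + m := add_le_add hC'card (hcard T0 hT0)
          _ = (t + 1) * m := by ring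

lemma cdOn_bound {V : Type} [Fintype V] {r n Δ : ℕ} (hr : 3 ≤ r)
    {parts : Fin r → Finset V} {G : Finset (Finset V)} (hpart : IsPartite r n parts G)
    (hΔ : ∀ T : Finset V, T.card = r - 1 → degSet G T ≤ Δ)
    {S : Finset V} {v : V} (hv : v ∈ S) (u : V) :
    cdOn r G S u ≤ Δ * n ^ (r - 3) := by
  classical
  set A := (CN r G S).filter (fun T => u ∈ T) with hA
  have hcd : cdOn r G S u = A.card := rfl
  rcases A.eq_empty_or_nonempty with hAe | ⟨T0, hT0⟩
  · rw [hcd, hAe]; simp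
  have hAfact : ∀ T ∈ A, u ∈ T ∧ T.card = r - 1 ∧ v ∉ T ∧ insert v T ∈ G := by
    intro T hT
    have h1 := Finset.mem_filter.mp hT
    have h2 := (Finset.mem_filter.mp h1.1).2
    exact ⟨h1.2, h2.1, (h2.2 v hv).1, (h2.2 v hv).2⟩
  obtain ⟨i, hui⟩ := hpart.2.1 u
  obtain ⟨j, hvj⟩ := hpart.2.1 v
  have huv : u ≠ v := fun e => (hAfact T0 hT0).2.2.1 (e ▸ (hAfact T0 hT0).1)
  have hij : i ≠ j := by
    intro e; subst e
    have he := hpart.2.2.2 _ (hAfact T0 hT0).2.2.2 i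
    have hu' : u ∈ insert v T0 ∩ parts i :=
      Finset.mem_inter.mpr ⟨Finset.mem_insert_of_mem (hAfact T0 hT0).1, hui⟩
    have hv' : v ∈ insert v T0 ∩ parts i :=
      Finset.mem_inter.mpr ⟨Finset.mem_insert_self _ _, hvj⟩
    exact huv (Finset.card_le_one.mp he.le u hu' v hv')
  -- choose a third index k
  have hss : ({i, j} : Finset (Fin r)) ⊂ Finset.univ := by
    refine Finset.ssubset_univ_iff.mpr ?_
    intro e
    have h2 : ({i, j} : Finset (Fin r)).card ≤ 2 :=
      (Finset.card_insert_le _ _).trans (by simp)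
    rw [e, Finset.card_univ, Fintype.card_fin] at h2
    omega
  obtain ⟨k, -, hk⟩ := Finset.exists_of_ssubset hss
  have hki : k ≠ i := fun e => hk (by simp [e])
  have hkj : k ≠ j := fun e => hk (by simp [e])
  set f : Finset V → Finset V := fun T => (insert v T) \ parts k with hf
  -- facts about elements of the image
  have hBfact : ∀ T' ∈ A.image f,
      (∀ ℓ, ℓ ≠ k → ∃ e ∈ G, T' ∩ parts ℓ = e ∩ parts ℓ) ∧
      T' ∩ parts k = ∅ ∧ u ∈ T' ∧ v ∈ T' ∧ T'.card = r - 1 := by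
    intro T' hT'
    obtain ⟨T, hTA, rfl⟩ := Finset.mem_image.mp hT'
    obtain ⟨huT, hTcard, hvT, heG⟩ := hAfact T hTA
    have hecard : (insert v T).card = r := by
      rw [Finset.card_insert_of_notMem hvT, hTcard]; omega
    refine ⟨?_, ?_, ?_, ?_, ?_⟩
    · intro ℓ hℓ
      refine ⟨insert v T, heG, ?_⟩
      ext x
      simp only [hf, Finset.mem_inter, Finset.mem_sdiff]
      constructor
      · rintro ⟨⟨hx1, _⟩, hx2⟩; exact ⟨hx1, hx2⟩
      · rintro ⟨hx1, hx2⟩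
        exact ⟨⟨hx1, Finset.disjoint_left.mp (hpart.1 ℓ k hℓ) hx2⟩, hx2⟩
    · exact Finset.sdiff_inter_self _ _
    · exact Finset.mem_sdiff.mpr ⟨Finset.mem_insert_of_mem huT,
        Finset.disjoint_left.mp (hpart.1 i k (Ne.symm hki)) hui⟩
    · exact Finset.mem_sdiff.mpr ⟨Finset.mem_insert_self _ _,
        Finset.disjoint_left.mp (hpart.1 j k (Ne.symm hkj)) hvj⟩
    · have h1 : (insert v T) \ parts k = (insert v T) \ ((insert v T) ∩ parts k) :=
        (Finset.sdiff_inter_self_left _ _).symm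
      rw [hf]
      simp only []
      rw [h1, Finset.card_sdiff_of_subset Finset.inter_subset_left, hecard,
        hpart.2.2.2 _ heG k]
  have hBcard1 : ∀ T' ∈ A.image f, ∀ ℓ, ℓ ≠ k → (T' ∩ parts ℓ).card = 1 := by
    intro T' hT' ℓ hℓ
    obtain ⟨e, heG, hee⟩ := (hBfact T' hT').1 ℓ hℓ
    rw [hee]; exact hpart.2.2.2 _ heG ℓ
  -- step I: fibers have size ≤ Δ
  have hstep1 : A.card ≤ Δ * (A.image f).card := by
    apply Finset.card_le_mul_card_image
    intro T' hT'
    have hT'card : T'.card = r - 1 := (hBfact T' hT').2.2.2.2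
    calc (A.filter (fun T => f T = T')).card
        ≤ (G.filter (fun e => T' ⊆ e)).card := by
          apply Finset.card_le_card_of_injOn (fun T => insert v T)
          · intro T hT
            have hT2 := Finset.mem_filter.mp hT
            obtain ⟨-, -, hvT, heG⟩ := hAfact T hT2.1
            refine Finset.mem_filter.mpr ⟨heG, ?_⟩
            rw [← hT2.2, hf]
            exact Finset.sdiff_subset
          · intro T1 h1 T2 h2 heq
            have hv1 := (hAfact T1 (Finset.mem_filter.mp h1).1).2.2.1
            have hv2 := (hAfact T2 (Finset.mem_filter.mp h2).1).2.2.1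
            have heqq : insert v T1 = insert v T2 := heq
            have : (insert v T1).erase v = (insert v T2).erase v := by rw [heqq]
            rwa [Finset.erase_insert hv1, Finset.erase_insert hv2] at this
      _ ≤ Δ := hΔ T' hT'card
  -- step II: the image has size ≤ n ^ (r - 3)
  set sidx : Finset (Fin r) := Finset.univ \ {i, j, k} with hsidx
  have hsidxcard : sidx.card = r - 3 := by
    rw [hsidx, Finset.card_sdiff_of_subset (Finset.subset_univ _), Finset.card_univ, Fintype.card_fin]
    have : ({i, j, k} : Finset (Fin r)).card = 3 := by
      rw [Finset.card_insert_of_notMem (by simp [hij, Ne.symm hki]),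
        Finset.card_insert_of_notMem (by simp [Ne.symm hkj]), Finset.card_singleton]
    rw [this]
  set Φ : Finset V → (∀ a ∈ sidx, V) :=
    fun T' ℓ _ => if h : (T' ∩ parts ℓ).Nonempty then h.choose else u with hΦ
  have hΦmem : ∀ T' ∈ A.image f, ∀ ℓ (hℓ : ℓ ∈ sidx), Φ T' ℓ hℓ ∈ T' ∩ parts ℓ := by
    intro T' hT' ℓ hℓ
    have hℓk : ℓ ≠ k := by
      rw [hsidx] at hℓ; simp at hℓ; tauto
    have hne : (T' ∩ parts ℓ).Nonempty :=
      Finset.card_pos.mp (by rw [hBcard1 T' hT' ℓ hℓk]; omega)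
    rw [hΦ]
    simp only [dif_pos hne]
    exact hne.choose_spec
  have hstep2 : (A.image f).card ≤ n ^ (r - 3) := by
    have hle : (A.image f).card ≤ (sidx.pi (fun ℓ => parts ℓ)).card := by
      apply Finset.card_le_card_of_injOn Φ
      · intro T' hT'
        rw [Finset.mem_coe, Finset.mem_pi]
        intro ℓ hℓ
        exact (Finset.mem_inter.mp (hΦmem T' hT' ℓ hℓ)).2
      · have key : ∀ T1 ∈ A.image f, ∀ T2 ∈ A.image f, Φ T1 = Φ T2 → T1 ⊆ T2 := by
          intro T1 h1 T2 h2 heq x hx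
          obtain ⟨ℓ, hxℓ⟩ := hpart.2.1 x
          by_cases hℓk : ℓ = k
          · exfalso
            have := (hBfact T1 h1).2.1
            subst hℓk
            exact Finset.eq_empty_iff_forall_notMem.mp this x
              (Finset.mem_inter.mpr ⟨hx, hxℓ⟩)
          by_cases hℓi : ℓ = i
          · subst hℓi
            have hc := hBcard1 T1 h1 ℓ hℓk
            have hx' : x ∈ T1 ∩ parts ℓ := Finset.mem_inter.mpr ⟨hx, hxℓ⟩
            have hu' : u ∈ T1 ∩ parts ℓ :=
              Finset.mem_inter.mpr ⟨(hBfact T1 h1).2.2.1, hui⟩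
            have : x = u := Finset.card_le_one.mp hc.le x hx' u hu'
            rw [this]; exact (hBfact T2 h2).2.2.1
          by_cases hℓj : ℓ = j
          · subst hℓj
            have hc := hBcard1 T1 h1 ℓ hℓk
            have hx' : x ∈ T1 ∩ parts ℓ := Finset.mem_inter.mpr ⟨hx, hxℓ⟩
            have hv' : v ∈ T1 ∩ parts ℓ :=
              Finset.mem_inter.mpr ⟨(hBfact T1 h1).2.2.2.1, hvj⟩
            have : x = v := Finset.card_le_one.mp hc.le x hx' v hv'
            rw [this]; exact (hBfact T2 h2).2.2.2.1
          · have hℓ : ℓ ∈ sidx := by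
              rw [hsidx]; simp [hℓi, hℓj, hℓk]
            have hm1 := hΦmem T1 h1 ℓ hℓ
            have hm2 := hΦmem T2 h2 ℓ hℓ
            have hc := hBcard1 T1 h1 ℓ hℓk
            have hx' : x ∈ T1 ∩ parts ℓ := Finset.mem_inter.mpr ⟨hx, hxℓ⟩
            have hxe : x = Φ T1 ℓ hℓ := Finset.card_le_one.mp hc.le x hx' _ hm1
            have heq' : Φ T1 ℓ hℓ = Φ T2 ℓ hℓ := by rw [heq]
            rw [hxe, heq']
            exact (Finset.mem_inter.mp hm2).1
        intro T1 h1 T2 h2 heq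
        exact Finset.Subset.antisymm
          (key T1 (Finset.mem_coe.mp h1) T2 (Finset.mem_coe.mp h2) heq)
          (key T2 (Finset.mem_coe.mp h2) T1 (Finset.mem_coe.mp h1) heq.symm)
    calc (A.image f).card ≤ (sidx.pi (fun ℓ => parts ℓ)).card := hle
      _ = n ^ (r - 3) := by
        rw [Finset.card_pi]
        rw [Finset.prod_congr rfl (fun ℓ _ => hpart.2.2.1 ℓ), Finset.prod_const, hsidxcard]
  calc cdOn r G S u = A.card := hcd
    _ ≤ Δ * (A.image f).card := hstep1
    _ ≤ Δ * n ^ (r - 3) := Nat.mul_le_mul_left _ hstep2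

theorem stmt_5 {V : Type} [Fintype V] (r s t n Δ : ℕ) (hr : 3 ≤ r) (hs : 1 ≤ s) (ht : 1 ≤ t)
    (parts : Fin r → Finset V) (G : Finset (Finset V)) (hpart : IsPartite r n parts G)
    (hfree : KstFree r s t G)
    (hΔ : ∀ T : Finset V, T.card = r - 1 → degSet G T ≤ Δ)
    (S : Finset V) (hS : S.card = s) :
    (CN r G S).card ≤ r * t * Δ * n ^ (r - 3) := by
  classical
  obtain ⟨v, hv⟩ : S.Nonempty := Finset.card_pos.mp (by omega)
  have hnod : ¬ ∃ X : Fin t → Finset V,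
      (∀ i, X i ∈ CN r G S) ∧ ∀ i j, i ≠ j → Disjoint (X i) (X j) := by
    rintro ⟨X, hmem, hdisj⟩
    apply hfree
    refine ⟨X, S, ?_, hS, hdisj, ?_, ?_⟩
    · intro i; exact ((Finset.mem_filter.mp (hmem i)).2).1
    · intro i
      rw [Finset.disjoint_right]
      intro y hy
      exact (((Finset.mem_filter.mp (hmem i)).2).2 y hy).1
    · intro i y hy
      exact (((Finset.mem_filter.mp (hmem i)).2).2 y hy).2
  obtain ⟨C, hcov, hCcard⟩ := exists_cover_aux (r - 1) t (CN r G S) hnod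
    (fun T hT => le_of_eq (Finset.mem_filter.mp hT).2.1)
  have hsum : (CN r G S).card ≤ ∑ u ∈ C, cdOn r G S u := by
    have hsub : CN r G S ⊆ C.biUnion (fun u => (CN r G S).filter (fun T => u ∈ T)) := by
      intro T hT
      obtain ⟨x, hxC, hxT⟩ := hcov T hT
      exact Finset.mem_biUnion.mpr ⟨x, hxC, Finset.mem_filter.mpr ⟨hT, hxT⟩⟩
    exact (Finset.card_le_card hsub).trans Finset.card_biUnion_le
  have hbound : ∀ u ∈ C, cdOn r G S u ≤ Δ * n ^ (r - 3) :=
    fun u _ => cdOn_bound hr hpart hΔ hv u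
  calc (CN r G S).card ≤ ∑ u ∈ C, cdOn r G S u := hsum
    _ ≤ ∑ _u ∈ C, Δ * n ^ (r - 3) := Finset.sum_le_sum hbound
    _ = C.card * (Δ * n ^ (r - 3)) := by rw [Finset.sum_const, smul_eq_mul]
    _ ≤ (t * (r - 1)) * (Δ * n ^ (r - 3)) :=
        Nat.mul_le_mul_right _ hCcard
    _ ≤ r * t * Δ * n ^ (r - 3) := by
        have h1 : t * (r - 1) ≤ r * t := by
          calc t * (r - 1) ≤ t * r := Nat.mul_le_mul_left _ (by omega)
            _ = r * t := Nat.mul_comm _ _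
        calc (t * (r - 1)) * (Δ * n ^ (r - 3))
            ≤ (r * t) * (Δ * n ^ (r - 3)) := Nat.mul_le_mul_right _ h1
          _ = r * t * Δ * n ^ (r - 3) := by ring
end
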